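/- If G retracts onto a subgroup H (there is a homomorphism ρ : G → H with ρ|_H = id) and G is finitely presented while H is finitely generated, then ker ρ is normally finitely generated in G; moreover G is isomorphic to the semidirect product ker ρ ⋊ H. -/

import Mathlib

/-- `G` is finitely presented: it is the quotient of a finitely generated free
group by the normal closure of finitely many relators. -/
def IsFinitelyPresentedGroup (G : Type*) [Group G] : Prop :=
  ∃ (n : ℕ) (R : Finset (FreeGroup (Fin n))) (φ : FreeGroup (Fin n) →* G),
    Function.Surjective φ ∧ φ.ker = Subgroup.normalClosure (R : Set (FreeGroup (Fin n)))

/-- If `G` retracts onto a subgroup `H` via `ρ`, `G` is finitely presented and `H`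
is finitely generated, then `ker ρ` is normally finitely generated in `G`, and
`G ≅ ker ρ ⋊ H`: every `g ∈ G` factors uniquely as `g = n · h` with `n ∈ ker ρ`
and `h ∈ H`. -/
theorem retraction_semidirect_decomposition {G : Type*} [Group G]
    (hG : IsFinitelyPresentedGroup G) (H : Subgroup G) (hH : H.FG)
    (ρ : G →* G) (hρ1 : ∀ g : G, ρ g ∈ H) (hρ2 : ∀ h ∈ H, ρ h = h) :
    (∃ F : Finset G, Subgroup.normalClosure (F : Set G) = ρ.ker) ∧
      ∀ g : G, ∃! p : ρ.ker × H, g = (p.1 : G) * (p.2 : G) := by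
  classical
  have hρρ : ∀ g : G, ρ (ρ g) = ρ g := fun g => hρ2 _ (hρ1 g)
  constructor
  · obtain ⟨n, R, φ, hsurj, -⟩ := hG
    set F : Finset G :=
      Finset.image (fun i => φ (pure i) * (ρ (φ (pure i)))⁻¹)
        Finset.univ with hF
    refine ⟨F, le_antisymm ?_ ?_⟩
    · apply Subgroup.normalClosure_le_normal
      intro g hg
      simp only [hF, Finset.coe_image, Set.mem_image, Finset.coe_univ] at hg
      obtain ⟨i, -, rfl⟩ := hg
      simp [MonoidHom.mem_ker, hρρ]
    · set N := Subgroup.normalClosure (F : Set G) with hN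
      have key : ∀ g : G, g * (ρ g)⁻¹ ∈ N := by
        intro g
        obtain ⟨w, rfl⟩ := hsurj g
        induction w using FreeGroup.induction_on with
        | C1 => simpa using Subgroup.one_mem N
        | of i =>
            exact Subgroup.subset_normalClosure
              (Finset.mem_coe.mpr (Finset.mem_image_of_mem _ (Finset.mem_univ i)))
        | inv_of i h =>
            have : φ (pure i)⁻¹ * (ρ (φ (pure i)⁻¹))⁻¹ =
                (φ (pure i))⁻¹ *
                  (φ (pure i) * (ρ (φ (pure i)))⁻¹)⁻¹ *
                  ((φ (pure i))⁻¹)⁻¹ := by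
              rw [map_inv, map_inv]; group
            erw [this]
            exact Subgroup.normalClosure_normal.conj_mem _ (Subgroup.inv_mem _ h) _
        | mul a b ha hb =>
            have : φ (a * b) * (ρ (φ (a * b)))⁻¹ =
                (φ a * (φ b * (ρ (φ b))⁻¹) * (φ a)⁻¹) * (φ a * (ρ (φ a))⁻¹) := by
              rw [map_mul, map_mul]; group
            rw [this]
            exact Subgroup.mul_mem _
              (Subgroup.normalClosure_normal.conj_mem _ hb _) ha
      intro g hg
      rw [MonoidHom.mem_ker] at hg
      have := key g
      rwa [hg, inv_one, mul_one] at this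
  · intro g
    have hker : g * (ρ g)⁻¹ ∈ ρ.ker := by
      simp [MonoidHom.mem_ker, hρρ]
    refine ⟨(⟨g * (ρ g)⁻¹, hker⟩, ⟨ρ g, hρ1 g⟩), by simp, ?_⟩
    rintro ⟨n, h⟩ hq
    have hρg : ρ g = (h : G) := by
      rw [hq, map_mul, hρ2 _ h.2]
      have : ρ (n : G) = 1 := n.2
      rw [this, one_mul]
    ext
    · simp only
      rw [hρg, hq]
      group
    · simp [hρg]
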